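/- In a cell complex, if a face A has boundary word B(A) = (X a a^{-1}) (cyclically), then the cell complex is equivalent (under the least equivalence relation generated by elementary subdivisions) to the cell complex obtained by deleting a and replacing A with a face A' whose boundary is (X). -/

import Mathlib

/-- An oriented edge: an edge name together with an orientation. -/
abbrev OEdge := ℕ × Bool

/-- A boundary word of a face (read cyclically). -/
abbrev CWord := List OEdge

/-- A cell complex, presented by a choice of boundary word for each face. -/
abbrev PreCell := Multiset CWord

/-- The inverse of an oriented edge. -/
def oinv (x : OEdge) : OEdge := (x.1, !x.2)

/-- The inverse of a boundary word. -/
def winv (w : CWord) : CWord := (w.map oinv).reverse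

/-- The edge `e` occurs (in some orientation) in the word `w`. -/
def occursW (e : ℕ) (w : CWord) : Prop := ∃ b, (e, b) ∈ w

/-- The edge `e` occurs in the complex `C`. -/
def occursC (e : ℕ) (C : PreCell) : Prop := ∃ w ∈ C, occursW e w

/-- The total number of occurrences of the edge `e` (in either orientation) among the
boundary words of `C`. -/
def occCount (e : ℕ) (C : PreCell) : ℕ :=
  (C.map fun w => w.countP fun p => p.1 == e).sum

/-- `(F, E, B)` is a cell complex: every (oriented) edge appears at most twice in total
among the chosen boundary words. -/
def IsCellComplex (C : PreCell) : Prop := ∀ e : ℕ, occCount e C ≤ 2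

/-- Substitution used in an elementary subdivision: replace the edge `a` by the two-letter
word `bc` (and `a⁻¹` by `c⁻¹b⁻¹`). -/
def substEdge (a b c : ℕ) (p : OEdge) : CWord :=
  if p.1 = a then (if p.2 then [(b, true), (c, true)] else [(c, false), (b, false)])
  else [p]

/-- The elementary moves on cell complexes: cyclic rotation of a boundary word, replacing a
face by its inverse, splitting a face `(XY)` into `(Xa) + (a⁻¹Y)` along a fresh edge `a`,
and subdividing an edge `a` into a word `bc` of fresh edges. -/
inductive ElemMove : PreCell → PreCell → Prop
  | rot (w₁ w₂ : CWord) (C : PreCell) :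
      ElemMove ((w₁ ++ w₂) ::ₘ C) ((w₂ ++ w₁) ::ₘ C)
  | invert (w : CWord) (C : PreCell) :
      ElemMove (w ::ₘ C) (winv w ::ₘ C)
  | split (Xw Yw : CWord) (a : ℕ) (C : PreCell)
      (haX : ¬ occursW a Xw) (haY : ¬ occursW a Yw) (haC : ¬ occursC a C) :
      ElemMove ((Xw ++ Yw) ::ₘ C)
        ((Xw ++ [(a, true)]) ::ₘ ((a, false) :: Yw) ::ₘ C)
  | subdivide (a b c : ℕ) (C : PreCell)
      (hb : ¬ occursC b C) (hc : ¬ occursC c C) (hbc : b ≠ c) :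
      ElemMove C (C.map fun w => w.flatMap (substEdge a b c))

/-- Equivalence of cell complexes: the least equivalence relation generated by the
elementary moves (elementary subdivisions and their inverses). -/
def CellEquiv : PreCell → PreCell → Prop := Relation.EqvGen ElemMove

section Helpers

/-- bound on edge names in a word -/
def wb (w : CWord) : ℕ := (w.map Prod.fst).foldr max 0

def cb (C : PreCell) : ℕ := (C.map wb).sup

lemma le_foldr_max {x : ℕ} : ∀ l : List ℕ, x ∈ l → x ≤ l.foldr max 0
  | y :: l, h => by
    rcases List.mem_cons.1 h with rfl | h
    · exact le_max_left _ _
    · exact le_trans (le_foldr_max l h) (le_max_right _ _)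

lemma occursW_le {e : ℕ} {w : CWord} (h : occursW e w) : e ≤ wb w := by
  obtain ⟨b, hb⟩ := h
  exact le_foldr_max _ (List.mem_map.2 ⟨(e, b), hb, rfl⟩)

lemma occursC_le {e : ℕ} {C : PreCell} (h : occursC e C) : e ≤ cb C := by
  obtain ⟨w, hw, he⟩ := h
  refine le_trans (occursW_le he) ?_
  have : wb w ∈ C.map wb := Multiset.mem_map.2 ⟨w, hw, rfl⟩
  exact Multiset.le_sup this

lemma occursC_cons {e : ℕ} {w : CWord} {C : PreCell} :
    occursC e (w ::ₘ C) ↔ occursW e w ∨ occursC e C := by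
  constructor
  · rintro ⟨v, hv, he⟩
    rcases Multiset.mem_cons.1 hv with rfl | hv
    · exact Or.inl he
    · exact Or.inr ⟨v, hv, he⟩
  · rintro (h | ⟨v, hv, he⟩)
    · exact ⟨w, Multiset.mem_cons_self _ _, h⟩
    · exact ⟨v, Multiset.mem_cons_of_mem hv, he⟩

lemma occursW_append {e : ℕ} {w v : CWord} :
    occursW e (w ++ v) ↔ occursW e w ∨ occursW e v := by
  constructor
  · rintro ⟨b, hb⟩
    rcases List.mem_append.1 hb with h | h
    · exact Or.inl ⟨b, h⟩
    · exact Or.inr ⟨b, h⟩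
  · rintro (⟨b, hb⟩ | ⟨b, hb⟩)
    · exact ⟨b, List.mem_append.2 (Or.inl hb)⟩
    · exact ⟨b, List.mem_append.2 (Or.inr hb)⟩

lemma flatMap_substEdge_id {a b c : ℕ} : ∀ {w : CWord}, ¬ occursW a w →
    w.flatMap (substEdge a b c) = w
  | [], _ => rfl
  | p :: w, h => by
    have hp : p.1 ≠ a := by
      rintro rfl
      exact h ⟨p.2, List.mem_cons_self⟩
    have hw : ¬ occursW a w := fun ⟨b', hb'⟩ => h ⟨b', List.mem_cons_of_mem _ hb'⟩
    simp [List.flatMap_cons, substEdge, hp, flatMap_substEdge_id hw]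

lemma map_flatMap_substEdge_id {a b c : ℕ} {C : PreCell} (h : ¬ occursC a C) :
    C.map (fun w => w.flatMap (substEdge a b c)) = C := by
  induction C using Multiset.induction_on with
  | empty => simp
  | cons w s ih =>
    rw [occursC_cons] at h
    push_neg at h
    rw [Multiset.map_cons, flatMap_substEdge_id h.1, ih h.2]

end Helpers


/-- In a cell complex, if a face `A` has boundary word
`B(A) = (X a a⁻¹)` (cyclically), then the complex is equivalent to the one obtained by
deleting the edge `a` and replacing `A` by a face `A'` with boundary `(X)`. -/
theorem remove_consecutive_inverse (Xw : CWord) (a : ℕ) (C : PreCell)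
    (hval : IsCellComplex ((Xw ++ [(a, true), (a, false)]) ::ₘ C))
    (haX : ¬ occursW a Xw) (haC : ¬ occursC a C) :
    CellEquiv ((Xw ++ [(a, true), (a, false)]) ::ₘ C) (Xw ::ₘ C) := by
  set N := cb ((Xw ++ [(a, true), (a, false)]) ::ₘ C) with hN
  have haN : a ≤ N := occursC_le ⟨_, Multiset.mem_cons_self _ _,
    ⟨true, List.mem_append.2 (Or.inr (List.mem_cons_self))⟩⟩
  have hXN : ∀ e, occursW e Xw → e ≤ N := fun e he =>
    occursC_le ⟨_, Multiset.mem_cons_self _ _, occursW_append.2 (Or.inl he)⟩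
  have hCN : ∀ e, occursC e C → e ≤ N := fun e ⟨w, hw, he⟩ =>
    occursC_le ⟨w, Multiset.mem_cons_of_mem hw, he⟩
  set a₀ := N + 1 with ha₀
  set c := N + 2 with hc
  have ha₀X : ¬ occursW a₀ Xw := fun h => by have := hXN _ h; omega
  have ha₀C : ¬ occursC a₀ C := fun h => by have := hCN _ h; omega
  have hcC : ¬ occursC c C := fun h => by have := hCN _ h; omega
  have hcX : ¬ occursW c Xw := fun h => by have := hXN _ h; omega
  -- step 1: X ::ₘ C → (X a₀) ::ₘ (a₀⁻¹) ::ₘ C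
  have step1 : ElemMove (Xw ::ₘ C)
      ((Xw ++ [(a₀, true)]) ::ₘ [(a₀, false)] ::ₘ C) := by
    have := ElemMove.split Xw [] a₀ C ha₀X (by rintro ⟨b, hb⟩; simp at hb) ha₀C
    simpa using this
  -- step 2: subdivide a₀ into a c
  have step2 : ElemMove ((Xw ++ [(a₀, true)]) ::ₘ [(a₀, false)] ::ₘ C)
      ((Xw ++ [(a, true), (c, true)]) ::ₘ [(c, false), (a, false)] ::ₘ C) := by
    have hb : ¬ occursC a ((Xw ++ [(a₀, true)]) ::ₘ [(a₀, false)] ::ₘ C) := by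
      rw [occursC_cons, occursC_cons]
      rintro (h | h | h)
      · rcases occursW_append.1 h with h | ⟨b, hb⟩
        · exact haX h
        · simp at hb <;> omega
      · obtain ⟨b, hb⟩ := h; simp at hb <;> omega
      · exact haC h
    have hc' : ¬ occursC c ((Xw ++ [(a₀, true)]) ::ₘ [(a₀, false)] ::ₘ C) := by
      rw [occursC_cons, occursC_cons]
      rintro (h | h | h)
      · rcases occursW_append.1 h with h | ⟨b, hb⟩
        · exact hcX h
        · simp at hb <;> omega
      · obtain ⟨b, hb⟩ := h; simp at hb <;> omega
      · exact hcC h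
    have := ElemMove.subdivide a₀ a c _ hb hc' (by omega)
    rw [Multiset.map_cons, Multiset.map_cons, map_flatMap_substEdge_id ha₀C] at this
    have e1 : (Xw ++ [(a₀, true)]).flatMap (substEdge a₀ a c)
        = Xw ++ [(a, true), (c, true)] := by
      rw [List.flatMap_append, flatMap_substEdge_id ha₀X]
      simp [substEdge]
    have e2 : ([(a₀, false)] : CWord).flatMap (substEdge a₀ a c)
        = [(c, false), (a, false)] := by simp [substEdge]
    rwa [e1, e2] at this
  -- step 3 (reversed): merge along c
  have step3 : ElemMove ((Xw ++ [(a, true), (a, false)]) ::ₘ C)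
      ((Xw ++ [(a, true), (c, true)]) ::ₘ [(c, false), (a, false)] ::ₘ C) := by
    have hcXa : ¬ occursW c (Xw ++ [(a, true)]) := by
      rw [occursW_append]
      rintro (h | ⟨b, hb⟩)
      · exact hcX h
      · simp at hb <;> omega
    have hcY : ¬ occursW c [(a, false)] := by
      rintro ⟨b, hb⟩; simp at hb <;> omega
    have := ElemMove.split (Xw ++ [(a, true)]) [(a, false)] c C hcXa hcY hcC
    simpa using this
  exact Relation.EqvGen.trans _ _ _ (Relation.EqvGen.rel _ _ step3)
    (Relation.EqvGen.trans _ _ _ (Relation.EqvGen.symm _ _ (Relation.EqvGen.rel _ _ step2))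
      (Relation.EqvGen.symm _ _ (Relation.EqvGen.rel _ _ step1)))
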